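/- Let (M,g) be an n-dimensional Riemannian manifold with projective semi-symmetric connection ∇̃ and let τ be a torse-forming vector field (∇_X τ = φX + α(X)τ). If (£̃_τ g) + [2λ - 2r̃ - (p + 2/n)] g = 0, where r̃ = r + Tr(θ) - (n-1)Tr(ω), then λ = r - φ + Tr(θ) - (n-1)Tr(ω) + (1/2)(p + 2/n) - ((n-1)/n)π(τ) - α(τ)/n. -/

import Mathlib

open scoped RealInnerProductSpace

/-- Conformal Yamabe soliton w.r.t. the projective semi-symmetric connection, with
torse-forming potential vector field `τ` (`∇_X τ = φ X + α(X) τ`),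
`r̃ = r + Tr(θ) - (n-1) Tr(ω)` (`trθ`, `trω` are the traces of `θ`, `ω`). If
`(£̃_τ g) + [2λ - 2r̃ - (p + 2/n)] g = 0` then
`λ = r - φ + Tr(θ) - (n-1)Tr(ω) + (1/2)(p + 2/n) - ((n-1)/n)π(τ) - α(τ)/n`. -/
theorem conformal_yamabe_projective_semi_symmetric
    {n : ℕ} (hn : 0 < n)
    {E : Type*} [NormedAddCommGroup E] [InnerProductSpace ℝ E]
    (b : OrthonormalBasis (Fin n) ℝ E)
    (τ ρ : E) (φ r trθ trω lam p : ℝ) (α : E →ₗ[ℝ] ℝ)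
    (nabla tilnabla : E →ₗ[ℝ] E)
    (htf : ∀ X : E, nabla X = φ • X + α X • τ)
    (htil : ∀ X : E,
      tilnabla X = nabla X
        + (((n : ℝ) - 1) / (2 * ((n : ℝ) + 1)) * ⟪τ, ρ⟫) • X
        + (((n : ℝ) - 1) / (2 * ((n : ℝ) + 1)) * ⟪X, ρ⟫) • τ
        + ((1 / 2) * ⟪τ, ρ⟫) • X
        - ((1 / 2) * ⟪X, ρ⟫) • τ)
    (hsol : ∀ X Y : E,
      (⟪tilnabla X, Y⟫ + ⟪X, tilnabla Y⟫)
        + (2 * lam - 2 * (r + trθ - ((n : ℝ) - 1) * trω) - (p + 2 / (n : ℝ))) * ⟪X, Y⟫ = 0) :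
    lam = r - φ + trθ - ((n : ℝ) - 1) * trω + (1 / 2) * (p + 2 / (n : ℝ))
        - (((n : ℝ) - 1) / (n : ℝ)) * ⟪τ, ρ⟫ - α τ / (n : ℝ) := by
  set A : ℝ := ((n : ℝ) - 1) / (2 * ((n : ℝ) + 1)) with hA
  set C : ℝ := 2 * lam - 2 * (r + trθ - ((n : ℝ) - 1) * trω) - (p + 2 / (n : ℝ)) with hC
  have hnR : (0:ℝ) < (n:ℝ) := by exact_mod_cast hn
  have hbb : ∀ i, ⟪b i, b i⟫ = (1:ℝ) := fun i => by
    rw [real_inner_self_eq_norm_sq, b.orthonormal.1 i]; norm_num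
  have key : ∀ i, 2 * (φ + α (b i) * ⟪b i, τ⟫ + A * ⟪τ, ρ⟫
      + A * ⟪b i, ρ⟫ * ⟪b i, τ⟫ + (1/2) * ⟪τ, ρ⟫
      - (1/2) * ⟪b i, ρ⟫ * ⟪b i, τ⟫) + C = 0 := by
    intro i
    have h := hsol (b i) (b i)
    rw [htil, htf] at h
    simp only [inner_add_left, inner_add_right, inner_sub_left, inner_sub_right,
      inner_smul_left, inner_smul_right, RCLike.inner_apply, conj_trivial, hbb i] at h
    linear_combination h + (α (b i) + A*⟪b i, ρ⟫ - (1/2)*⟪b i, ρ⟫) * real_inner_comm τ (b i)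
  have hsum := Finset.sum_congr rfl (fun i (_ : i ∈ Finset.univ) => key i)
  rw [Finset.sum_const_zero] at hsum
  have hpar : ∑ i, ⟪b i, ρ⟫ * ⟪b i, τ⟫ = ⟪τ, ρ⟫ := by
    calc ∑ i, ⟪b i, ρ⟫ * ⟪b i, τ⟫ = ∑ i, ⟪ρ, b i⟫ * ⟪b i, τ⟫ := by
          exact Finset.sum_congr rfl fun i _ => by rw [real_inner_comm (b i) ρ]
      _ = ⟪ρ, τ⟫ := b.sum_inner_mul_inner ρ τ
      _ = ⟪τ, ρ⟫ := real_inner_comm _ _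
  have hrep : ∑ i, α (b i) * ⟪b i, τ⟫ = α τ := by
    conv_rhs => rw [← b.sum_repr' τ]
    rw [map_sum]
    exact Finset.sum_congr rfl fun i _ => by
      rw [map_smul]; simp [mul_comm]
  have expand : ∀ i : Fin n, (2 * (φ + α (b i) * ⟪b i, τ⟫ + A * ⟪τ, ρ⟫
      + A * ⟪b i, ρ⟫ * ⟪b i, τ⟫ + (1/2) * ⟪τ, ρ⟫
      - (1/2) * ⟪b i, ρ⟫ * ⟪b i, τ⟫) + C)
      = (2*φ + 2*A*⟪τ, ρ⟫ + ⟪τ, ρ⟫ + C) + (2*A - 1)*(⟪b i, ρ⟫*⟪b i, τ⟫)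
        + 2*(α (b i)*⟪b i, τ⟫) := fun i => by ring
  rw [Finset.sum_congr rfl (fun i _ => expand i)] at hsum
  simp only [Finset.sum_add_distrib, ← Finset.mul_sum, hpar, hrep, Finset.sum_const,
    Finset.card_univ, Fintype.card_fin, nsmul_eq_mul] at hsum
  have hn0 : (n:ℝ) ≠ 0 := ne_of_gt hnR
  have hn1 : (n:ℝ) + 1 ≠ 0 := by positivity
  rw [hA, hC] at hsum
  field_simp at hsum
  have h40 : (4*(n:ℝ)*((n:ℝ)+1)) ≠ 0 := by positivity
  have hlam : lam = (4*(n:ℝ)*((n:ℝ)+1)*(r + trθ - ((n:ℝ)-1)*trω) - 4*(n:ℝ)*((n:ℝ)+1)*φ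
      + 2*(n:ℝ)*((n:ℝ)+1)*p + 4*((n:ℝ)+1) - 4*((n:ℝ)+1)*((n:ℝ)-1)*⟪τ, ρ⟫
      - 4*((n:ℝ)+1)*(α τ)) / (4*(n:ℝ)*((n:ℝ)+1)) := by
    rw [eq_div_iff h40]
    linear_combination 2 * hsum
  rw [hlam]
  field_simp
  ring
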